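/- arXiv:2111.03298 — 2 statements merged into one kernel-verified Lean document; each statement's English description precedes it below -/
import Mathlib

section
/- Let G ∈ QT_2 and let G' = G[V(G) \ {x, w, v}] be the subgraph of G induced by all vertices except x, w, v. If γ_t(G') ≤ a(G') + 1, then γ_t(G) ≤ a(G) + 1. -/
open SimpleGraph

/-- The total domination number of a graph. -/
noncomputable def totalDominationNumber {V : Type*} (G : SimpleGraph V) : ℕ :=
  sInf {k | ∃ D : Finset V, (∀ v : V, ∃ u ∈ D, G.Adj v u) ∧ D.card = k}

/-- The annihilation number of a graph. -/
noncomputable def annihilationNumber {V : Type*} (G : SimpleGraph V) : ℕ :=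
  sSup {k | ∃ S : Finset V, S.card = k ∧ ∑ v ∈ S, (G.neighborSet v).ncard ≤ G.edgeSet.ncard}

/-- Statuses used in the definition of the family `Γ`. -/
inductive Status
  | A | B | C

/-- A graph whose vertices are labeled with statuses. -/
structure LGraph where
  V : Type
  G : SimpleGraph V
  sta : V → Status

/-- Status-preserving isomorphism of labeled graphs. -/
def LIso (L₁ L₂ : LGraph) : Prop :=
  ∃ e : L₁.G ≃g L₂.G, ∀ v, L₂.sta (e v) = L₁.sta v

/-- The base labeled tree `T₀`: a path `P₆` whose two leaves have status `C`,
whose two support vertices have status `A`, and whose middle vertices have status `B`. -/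
def baseT0 : LGraph where
  V := Fin 6
  G := SimpleGraph.fromRel (fun i j => (i : ℕ) + 1 = (j : ℕ))
  sta := ![Status.C, Status.A, Status.B, Status.B, Status.A, Status.C]

/-- Operation `o₁`: to a labeled graph `L` with chosen vertex `y`, attach a new path
`x–w–v–z` (the vertices `Sum.inr 0, 1, 2, 3`) together with the edge `x y`, statuses
`sta x = sta w = B`, `sta v = A`, `sta z = C`. -/
def o1Ext (L : LGraph) (y : L.V) : LGraph where
  V := L.V ⊕ Fin 4
  G := (L.G.map Function.Embedding.inl) ⊔
    SimpleGraph.fromEdgeSet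
      {s(Sum.inl y, Sum.inr 0), s(Sum.inr 0, Sum.inr 1),
       s(Sum.inr 1, Sum.inr 2), s(Sum.inr 2, Sum.inr 3)}
  sta := Sum.elim L.sta ![Status.B, Status.B, Status.A, Status.C]

/-- Operation `o₂`: to a labeled graph `L` with chosen vertex `y`, attach a new path
`x–w–v` (the vertices `Sum.inr 0, 1, 2`) together with the edge `x y`, statuses
`sta x = B`, `sta w = A`, `sta v = C`. -/
def o2Ext (L : LGraph) (y : L.V) : LGraph where
  V := L.V ⊕ Fin 3
  G := (L.G.map Function.Embedding.inl) ⊔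
    SimpleGraph.fromEdgeSet
      {s(Sum.inl y, Sum.inr 0), s(Sum.inr 0, Sum.inr 1), s(Sum.inr 1, Sum.inr 2)}
  sta := Sum.elim L.sta ![Status.B, Status.A, Status.C]

/-- The family `Γ` of labeled trees (closed under status-preserving isomorphism):
it contains `T₀` and is closed under operation `o₁` (applied at a leaf of status `C`)
and operation `o₂` (applied at a vertex of status `B`). -/
inductive InGamma : LGraph → Prop
  | base (L : LGraph) : LIso baseT0 L → InGamma L
  | op1 (L : LGraph) (y : L.V) (hL : InGamma L) (hsta : L.sta y = Status.C)
      (hleaf : (L.G.neighborSet y).ncard = 1) (L' : LGraph) (h : LIso (o1Ext L y) L') :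
      InGamma L'
  | op2 (L : LGraph) (y : L.V) (hL : InGamma L) (hsta : L.sta y = Status.B)
      (L' : LGraph) (h : LIso (o2Ext L y) L') : InGamma L'

/-- Add one new vertex `h = Sum.inr ()` to `G` and join it to every vertex in `S`. -/
def attachVertex {V : Type} (G : SimpleGraph V) (S : Set V) : SimpleGraph (V ⊕ Unit) :=
  (G.map Function.Embedding.inl) ⊔
    SimpleGraph.fromEdgeSet {e | ∃ u ∈ S, e = s(Sum.inl u, Sum.inr ())}

lemma inGamma_finite {L : LGraph} (h : InGamma L) : Finite L.V := by
  induction h with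
  | base L hiso =>
    obtain ⟨e, -⟩ := hiso
    exact Finite.of_equiv (Fin 6) e.toEquiv
  | op1 L y hL hsta hleaf L' hiso ih =>
    obtain ⟨e, -⟩ := hiso
    have : Finite (L.V ⊕ Fin 4) := by have := ih; infer_instance
    exact @Finite.of_equiv _ _ this e.toEquiv
  | op2 L y hL hsta L' hiso ih =>
    obtain ⟨e, -⟩ := hiso
    have : Finite (L.V ⊕ Fin 3) := by have := ih; infer_instance
    exact @Finite.of_equiv _ _ this e.toEquiv

lemma inGamma_no_isolated {L : LGraph} (h : InGamma L) : ∀ u, ∃ v, L.G.Adj u v := by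
  induction h with
  | base L hiso =>
    obtain ⟨e, -⟩ := hiso
    intro u
    have h6' : ∀ u : Fin 6, ∃ v : Fin 6, u ≠ v ∧ ((u:ℕ)+1 = (v:ℕ) ∨ (v:ℕ)+1 = (u:ℕ)) := by
      decide
    have h6 : ∀ u : Fin 6, ∃ v, baseT0.G.Adj u v := by
      intro u
      obtain ⟨v, hv⟩ := h6' u
      exact ⟨v, (fromRel_adj _ _ _).mpr hv⟩
    obtain ⟨v, hv⟩ := h6 (e.symm u)
    refine ⟨e v, ?_⟩
    have := e.map_adj_iff (v := e.symm u) (w := v)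
    rw [e.apply_symm_apply] at this
    exact this.mpr hv
  | op1 L y hL hsta hleaf L' hiso ih =>
    obtain ⟨e, -⟩ := hiso
    intro u
    have hnew : ∀ u : (o1Ext L y).V, ∃ v, (o1Ext L y).G.Adj u v := by
      rintro (a | i)
      · obtain ⟨v, hv⟩ := ih a
        exact ⟨Sum.inl v, Or.inl (by simp only [map_adj, Function.Embedding.inl_apply, Sum.inl.injEq, exists_eq_right_right, exists_eq_right]; exact hv)⟩
      · fin_cases i
        · exact ⟨Sum.inr 1, Or.inr (by simp [fromEdgeSet_adj])⟩
        · exact ⟨Sum.inr 0, Or.inr (by simp [fromEdgeSet_adj, Sym2.eq_iff])⟩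
        · exact ⟨Sum.inr 1, Or.inr (by simp [fromEdgeSet_adj, Sym2.eq_iff])⟩
        · exact ⟨Sum.inr 2, Or.inr (by simp [fromEdgeSet_adj, Sym2.eq_iff])⟩
    obtain ⟨v, hv⟩ := hnew (e.symm u)
    refine ⟨e v, ?_⟩
    have := e.map_adj_iff (v := e.symm u) (w := v)
    rw [e.apply_symm_apply] at this
    exact this.mpr hv
  | op2 L y hL hsta L' hiso ih =>
    obtain ⟨e, -⟩ := hiso
    intro u
    have hnew : ∀ u : (o2Ext L y).V, ∃ v, (o2Ext L y).G.Adj u v := by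
      rintro (a | i)
      · obtain ⟨v, hv⟩ := ih a
        exact ⟨Sum.inl v, Or.inl (by simp only [map_adj, Function.Embedding.inl_apply, Sum.inl.injEq, exists_eq_right_right, exists_eq_right]; exact hv)⟩
      · fin_cases i
        · exact ⟨Sum.inr 1, Or.inr (by simp [fromEdgeSet_adj])⟩
        · exact ⟨Sum.inr 0, Or.inr (by simp [fromEdgeSet_adj, Sym2.eq_iff])⟩
        · exact ⟨Sum.inr 1, Or.inr (by simp [fromEdgeSet_adj, Sym2.eq_iff])⟩
    obtain ⟨v, hv⟩ := hnew (e.symm u)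
    refine ⟨e v, ?_⟩
    have := e.map_adj_iff (v := e.symm u) (w := v)
    rw [e.apply_symm_apply] at this
    exact this.mpr hv



lemma two_le_ncard' {α : Type*} {s : Set α} (hs : s.Finite) {a b : α}
    (hab : a ≠ b) (ha : a ∈ s) (hb : b ∈ s) : 2 ≤ s.ncard := by
  have hsub : ({a, b} : Set α) ⊆ s := by
    intro z hz
    rcases hz with rfl | hz
    · exact ha
    · rcases hz with rfl; exact hb
  calc (2:ℕ) = ({a, b} : Set α).ncard := (Set.ncard_pair hab).symm
    _ ≤ s.ncard := Set.ncard_le_ncard hsub hs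

lemma iso_deg {V W : Type*} {G : SimpleGraph V} {G' : SimpleGraph W} (e : G ≃g G') (v : V) :
    (G'.neighborSet (e v)).ncard = (G.neighborSet v).ncard := by
  rw [← Nat.card_coe_set_eq, ← Nat.card_coe_set_eq]
  exact (Nat.card_congr (e.mapNeighborSet v)).symm

lemma image_nbhd_subset {V W : Type*} (G : SimpleGraph V) (H : SimpleGraph W) (f : V ↪ W)
    (h : ∀ a b, G.Adj a b → H.Adj (f a) (f b)) (u : V) :
    f '' (G.neighborSet u) ⊆ H.neighborSet (f u) := by
  rintro - ⟨b, hb, rfl⟩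
  exact h u b hb

instance : DecidableEq Status := fun a b => by
  cases a <;> cases b <;> first | exact isTrue rfl | exact isFalse (fun h => Status.noConfusion h)

lemma liso_transport_Bdeg {L L' : LGraph} (h : LIso L L')
    (P : ∀ u, L.sta u = Status.B → 2 ≤ (L.G.neighborSet u).ncard) :
    ∀ u, L'.sta u = Status.B → 2 ≤ (L'.G.neighborSet u).ncard := by
  obtain ⟨e, hsta⟩ := h
  intro u hu
  have heq := hsta (e.symm u)
  rw [e.apply_symm_apply] at heq
  have h2 := P (e.symm u) (heq.symm.trans hu)
  have h3 := iso_deg e (e.symm u)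
  rw [e.apply_symm_apply] at h3
  rw [h3]
  exact h2

lemma inGamma_B_deg {L : LGraph} (h : InGamma L) :
    ∀ u, L.sta u = Status.B → 2 ≤ (L.G.neighborSet u).ncard := by
  induction h with
  | base L hiso =>
    haveI : Finite baseT0.V := by show Finite (Fin 6); infer_instance
    have hbase : ∀ u₀ : Fin 6, baseT0.sta u₀ = Status.B →
        2 ≤ (baseT0.G.neighborSet u₀).ncard := by
      intro u₀ hu₀
      fin_cases u₀
      · exact Status.noConfusion (show Status.C = Status.B from hu₀)
      · exact Status.noConfusion (show Status.A = Status.B from hu₀)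
      · have a1 : baseT0.G.Adj (2:Fin 6) (1:Fin 6) := (fromRel_adj (fun i j : Fin 6 => (i:ℕ)+1=(j:ℕ)) _ _).mpr (by decide)
        have a2 : baseT0.G.Adj (2:Fin 6) (3:Fin 6) := (fromRel_adj (fun i j : Fin 6 => (i:ℕ)+1=(j:ℕ)) _ _).mpr (by decide)
        exact two_le_ncard' (Set.toFinite _) (a := (1 : Fin 6)) (b := (3 : Fin 6)) (by decide : (1:Fin 6) ≠ 3) a1 a2
      · have a1 : baseT0.G.Adj (3:Fin 6) (2:Fin 6) := (fromRel_adj (fun i j : Fin 6 => (i:ℕ)+1=(j:ℕ)) _ _).mpr (by decide)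
        have a2 : baseT0.G.Adj (3:Fin 6) (4:Fin 6) := (fromRel_adj (fun i j : Fin 6 => (i:ℕ)+1=(j:ℕ)) _ _).mpr (by decide)
        exact two_le_ncard' (Set.toFinite _) (a := (2 : Fin 6)) (b := (4 : Fin 6)) (by decide : (2:Fin 6) ≠ 4) a1 a2
      · exact Status.noConfusion (show Status.A = Status.B from hu₀)
      · exact Status.noConfusion (show Status.C = Status.B from hu₀)
    exact liso_transport_Bdeg hiso hbase
  | op1 L y hL hsta hleaf L' hiso ih =>
    haveI : Finite L.V := inGamma_finite hL
    haveI : Finite (o1Ext L y).V := by show Finite (L.V ⊕ Fin 4); infer_instance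
    refine liso_transport_Bdeg hiso ?_
    rintro (a | i) hu₀
    · have h2 := ih a hu₀
      calc (2:ℕ) ≤ (L.G.neighborSet a).ncard := h2
        _ = ((Function.Embedding.inl : L.V ↪ L.V ⊕ Fin 4) '' (L.G.neighborSet a)).ncard :=
            (Set.ncard_image_of_injective _ Sum.inl_injective).symm
        _ ≤ ((o1Ext L y).G.neighborSet (Sum.inl a)).ncard := by
            refine Set.ncard_le_ncard (image_nbhd_subset _ _ _ (fun p q hpq => Or.inl ?_) a)
              (Set.toFinite _)
            simp only [map_adj, Function.Embedding.inl_apply, Sum.inl.injEq,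
              exists_eq_right_right, exists_eq_right]
            exact hpq
    · fin_cases i
      · have a1 : (o1Ext L y).G.Adj (Sum.inr 0) (Sum.inl y) :=
          Or.inr ((fromEdgeSet_adj _).mpr (by simp [Sym2.eq_iff]))
        have a2 : (o1Ext L y).G.Adj (Sum.inr 0) (Sum.inr 1) :=
          Or.inr ((fromEdgeSet_adj _).mpr (by simp [Sym2.eq_iff]))
        exact two_le_ncard' (Set.toFinite _) (a := (Sum.inl y : L.V ⊕ Fin 4))
          (b := (Sum.inr 1 : L.V ⊕ Fin 4)) Sum.inl_ne_inr a1 a2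
      · have a1 : (o1Ext L y).G.Adj (Sum.inr 1) (Sum.inr 0) :=
          Or.inr ((fromEdgeSet_adj _).mpr (by simp [Sym2.eq_iff]))
        have a2 : (o1Ext L y).G.Adj (Sum.inr 1) (Sum.inr 2) :=
          Or.inr ((fromEdgeSet_adj _).mpr (by simp [Sym2.eq_iff]))
        exact two_le_ncard' (Set.toFinite _) (a := (Sum.inr 0 : L.V ⊕ Fin 4))
          (b := (Sum.inr 2 : L.V ⊕ Fin 4))
          (fun h => absurd (Sum.inr_injective h) (by decide)) a1 a2
      · exact Status.noConfusion (show Status.A = Status.B from hu₀)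
      · exact Status.noConfusion (show Status.C = Status.B from hu₀)
  | op2 L y hL hsta L' hiso ih =>
    haveI : Finite L.V := inGamma_finite hL
    haveI : Finite (o2Ext L y).V := by show Finite (L.V ⊕ Fin 3); infer_instance
    refine liso_transport_Bdeg hiso ?_
    rintro (a | i) hu₀
    · have h2 := ih a hu₀
      calc (2:ℕ) ≤ (L.G.neighborSet a).ncard := h2
        _ = ((Function.Embedding.inl : L.V ↪ L.V ⊕ Fin 3) '' (L.G.neighborSet a)).ncard :=
            (Set.ncard_image_of_injective _ Sum.inl_injective).symm
        _ ≤ ((o2Ext L y).G.neighborSet (Sum.inl a)).ncard := by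
            refine Set.ncard_le_ncard (image_nbhd_subset _ _ _ (fun p q hpq => Or.inl ?_) a)
              (Set.toFinite _)
            simp only [map_adj, Function.Embedding.inl_apply, Sum.inl.injEq,
              exists_eq_right_right, exists_eq_right]
            exact hpq
    · fin_cases i
      · have a1 : (o2Ext L y).G.Adj (Sum.inr 0) (Sum.inl y) :=
          Or.inr ((fromEdgeSet_adj _).mpr (by simp [Sym2.eq_iff]))
        have a2 : (o2Ext L y).G.Adj (Sum.inr 0) (Sum.inr 1) :=
          Or.inr ((fromEdgeSet_adj _).mpr (by simp [Sym2.eq_iff]))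
        exact two_le_ncard' (Set.toFinite _) (a := (Sum.inl y : L.V ⊕ Fin 3))
          (b := (Sum.inr 1 : L.V ⊕ Fin 3)) Sum.inl_ne_inr a1 a2
      · exact Status.noConfusion (show Status.A = Status.B from hu₀)
      · exact Status.noConfusion (show Status.C = Status.B from hu₀)


section QT
variable {α : Type}

def o2G (Gt : SimpleGraph α) (y : α) : SimpleGraph (α ⊕ Fin 3) :=
  (Gt.map Function.Embedding.inl) ⊔
    SimpleGraph.fromEdgeSet
      {s(Sum.inl y, Sum.inr 0), s(Sum.inr 0, Sum.inr 1), s(Sum.inr 1, Sum.inr 2)}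

def GQ (Gt : SimpleGraph α) (y : α) (N : Finset α) : SimpleGraph ((α ⊕ Fin 3) ⊕ Unit) :=
  attachVertex (o2G Gt y) (Sum.inl '' (N : Set α))

def qT (p : α) : (α ⊕ Fin 3) ⊕ Unit := Sum.inl (Sum.inl p)
def qX : (α ⊕ Fin 3) ⊕ Unit := Sum.inl (Sum.inr 0)
def qW : (α ⊕ Fin 3) ⊕ Unit := Sum.inl (Sum.inr 1)
def qV : (α ⊕ Fin 3) ⊕ Unit := Sum.inl (Sum.inr 2)
def qH : (α ⊕ Fin 3) ⊕ Unit := Sum.inr ()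

lemma gq_adj (Gt : SimpleGraph α) (y : α) (N : Finset α) (a b : (α ⊕ Fin 3) ⊕ Unit) :
    (GQ Gt y N).Adj a b ↔
      (∃ p q, Gt.Adj p q ∧ a = qT p ∧ b = qT q) ∨
      ((a = qT y ∧ b = qX) ∨ (a = qX ∧ b = qT y)) ∨
      ((a = qX ∧ b = qW) ∨ (a = qW ∧ b = qX)) ∨
      ((a = qW ∧ b = qV) ∨ (a = qV ∧ b = qW)) ∨
      (∃ n ∈ N, (a = qT n ∧ b = qH) ∨ (a = qH ∧ b = qT n)) := by
  constructor
  · rintro (h | h)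
    · rw [map_adj] at h
      obtain ⟨a', b', hab, rfl, rfl⟩ := h
      rcases hab with hab | hab
      · rw [map_adj] at hab
        obtain ⟨p, q, hpq, rfl, rfl⟩ := hab
        exact Or.inl ⟨p, q, hpq, rfl, rfl⟩
      · rw [fromEdgeSet_adj] at hab
        obtain ⟨hmem, -⟩ := hab
        simp only [Set.mem_insert_iff, Set.mem_singleton_iff, Sym2.eq_iff] at hmem
        rcases hmem with (⟨rfl, rfl⟩|⟨rfl, rfl⟩)|(⟨rfl, rfl⟩|⟨rfl, rfl⟩)|(⟨rfl, rfl⟩|⟨rfl, rfl⟩) <;>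
          simp [qT, qX, qW, qV]
    · rw [fromEdgeSet_adj] at h
      obtain ⟨hmem, -⟩ := h
      simp only [Set.mem_setOf_eq, Set.mem_image, Finset.mem_coe] at hmem
      obtain ⟨u, ⟨n, hn, rfl⟩, he⟩ := hmem
      rw [Sym2.eq_iff] at he
      rcases he with ⟨rfl, rfl⟩ | ⟨rfl, rfl⟩
      · exact Or.inr (Or.inr (Or.inr (Or.inr ⟨n, hn, Or.inl ⟨rfl, rfl⟩⟩)))
      · exact Or.inr (Or.inr (Or.inr (Or.inr ⟨n, hn, Or.inr ⟨rfl, rfl⟩⟩)))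
  · rintro (⟨p, q, hpq, rfl, rfl⟩ | (⟨rfl, rfl⟩|⟨rfl, rfl⟩) | (⟨rfl, rfl⟩|⟨rfl, rfl⟩) |
      (⟨rfl, rfl⟩|⟨rfl, rfl⟩) | ⟨n, hn, (⟨rfl, rfl⟩|⟨rfl, rfl⟩)⟩)
    · exact Or.inl ((map_adj _ _ _ _).mpr ⟨Sum.inl p, Sum.inl q,
        Or.inl ((map_adj _ _ _ _).mpr ⟨p, q, hpq, rfl, rfl⟩), rfl, rfl⟩)
    · exact Or.inl ((map_adj _ _ _ _).mpr ⟨Sum.inl y, Sum.inr 0,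
        Or.inr ((fromEdgeSet_adj _).mpr (by simp)), rfl, rfl⟩)
    · exact Or.inl ((map_adj _ _ _ _).mpr ⟨Sum.inr 0, Sum.inl y,
        Or.inr ((fromEdgeSet_adj _).mpr (by simp [Sym2.eq_iff])), rfl, rfl⟩)
    · exact Or.inl ((map_adj _ _ _ _).mpr ⟨Sum.inr 0, Sum.inr 1,
        Or.inr ((fromEdgeSet_adj _).mpr (by simp [Sym2.eq_iff])), rfl, rfl⟩)
    · exact Or.inl ((map_adj _ _ _ _).mpr ⟨Sum.inr 1, Sum.inr 0,
        Or.inr ((fromEdgeSet_adj _).mpr (by simp [Sym2.eq_iff])), rfl, rfl⟩)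
    · exact Or.inl ((map_adj _ _ _ _).mpr ⟨Sum.inr 1, Sum.inr 2,
        Or.inr ((fromEdgeSet_adj _).mpr (by simp [Sym2.eq_iff])), rfl, rfl⟩)
    · exact Or.inl ((map_adj _ _ _ _).mpr ⟨Sum.inr 2, Sum.inr 1,
        Or.inr ((fromEdgeSet_adj _).mpr (by simp [Sym2.eq_iff])), rfl, rfl⟩)
    · exact Or.inr ((fromEdgeSet_adj _).mpr ⟨⟨Sum.inl n, ⟨n, hn, rfl⟩, by rfl⟩, by simp [qT, qH]⟩)
    · exact Or.inr ((fromEdgeSet_adj _).mpr ⟨⟨Sum.inl n, ⟨n, hn, rfl⟩, by rw [show s(qH, qT n) = s(qT n, qH) from Sym2.eq_swap]; rfl⟩,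
        by simp [qT, qH]⟩)

end QT

section QT2
variable {α : Type}

def qA (α : Type) : Set ((α ⊕ Fin 3) ⊕ Unit) :=
  {u | u ∉ ({qX, qW, qV} : Set ((α ⊕ Fin 3) ⊕ Unit))}

@[simp] lemma qT_mem_qA (p : α) : qT p ∈ qA α := by simp [qA, qT, qX, qW, qV]
@[simp] lemma qH_mem_qA : (qH : (α ⊕ Fin 3) ⊕ Unit) ∈ qA α := by simp [qA, qH, qX, qW, qV]
@[simp] lemma qX_not_mem_qA : (qX : (α ⊕ Fin 3) ⊕ Unit) ∉ qA α := by simp [qA]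
@[simp] lemma qW_not_mem_qA : (qW : (α ⊕ Fin 3) ⊕ Unit) ∉ qA α := by simp [qA]
@[simp] lemma qV_not_mem_qA : (qV : (α ⊕ Fin 3) ⊕ Unit) ∉ qA α := by simp [qA]

variable (Gt : SimpleGraph α) (y : α) (N : Finset α)

lemma nbhd_qV : (GQ Gt y N).neighborSet qV = {qW} := by
  ext b
  simp only [mem_neighborSet, gq_adj, Set.mem_singleton_iff, qT, qX, qW, qV, qH]
  constructor
  · rintro (⟨p, q, h, he, rfl⟩ | (⟨he, -⟩|⟨he, -⟩) | (⟨he, -⟩|⟨he, -⟩) | (⟨he,-⟩|⟨-,rfl⟩) |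
      ⟨n, hn, (⟨he, -⟩|⟨he, -⟩)⟩) <;> simp_all
  · rintro rfl
    simp

lemma nbhd_qW : (GQ Gt y N).neighborSet qW = {qX, qV} := by
  ext b
  simp only [mem_neighborSet, gq_adj, Set.mem_insert_iff, Set.mem_singleton_iff, qT, qX, qW, qV, qH]
  constructor
  · rintro (⟨p, q, h, he, rfl⟩ | (⟨he, -⟩|⟨he, -⟩) | (⟨he, -⟩|⟨-, rfl⟩) | (⟨-, rfl⟩|⟨he,-⟩) |
      ⟨n, hn, (⟨he, -⟩|⟨he, -⟩)⟩) <;> simp_all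
  · rintro (rfl | rfl) <;> simp

lemma nbhd_qX : (GQ Gt y N).neighborSet qX = {qT y, qW} := by
  ext b
  simp only [mem_neighborSet, gq_adj, Set.mem_insert_iff, Set.mem_singleton_iff, qT, qX, qW, qV, qH]
  constructor
  · rintro (⟨p, q, h, he, rfl⟩ | (⟨he, -⟩|⟨-, rfl⟩) | (⟨-, rfl⟩|⟨he, -⟩) | (⟨he,-⟩|⟨he,-⟩) |
      ⟨n, hn, (⟨he, -⟩|⟨he, -⟩)⟩) <;> simp_all
  · rintro (rfl | rfl) <;> simp


lemma induce_nbhd_ncard {V : Type} (G : SimpleGraph V) (A : Set V) (a : A) :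
    ((G.induce A).neighborSet a).ncard = (G.neighborSet a.val ∩ A).ncard := by
  have himg : G.neighborSet a.val ∩ A = Subtype.val '' ((G.induce A).neighborSet a) := by
    ext b
    simp only [Set.mem_inter_iff, mem_neighborSet, Set.mem_image]
    constructor
    · rintro ⟨hadj, hbA⟩
      exact ⟨⟨b, hbA⟩, comap_adj.mpr hadj, rfl⟩
    · rintro ⟨c, hc, rfl⟩
      exact ⟨comap_adj.mp hc, c.2⟩
  rw [himg, Set.ncard_image_of_injective _ Subtype.val_injective]

lemma nbhd_subset_qA (a : (α ⊕ Fin 3) ⊕ Unit) (ha : a ∈ qA α) (hay : a ≠ qT y) :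
    (GQ Gt y N).neighborSet a ⊆ qA α := by
  intro b hb
  by_contra hbA
  have hadj : (GQ Gt y N).Adj a b := hb
  have hb' : a ∈ (GQ Gt y N).neighborSet b := hadj.symm
  simp only [qA, Set.mem_setOf_eq, not_not, Set.mem_insert_iff, Set.mem_singleton_iff] at hbA
  rcases hbA with rfl | rfl | rfl
  · rw [nbhd_qX] at hb'
    rcases hb' with rfl | rfl
    · exact hay rfl
    · exact qW_not_mem_qA ha
  · rw [nbhd_qW] at hb'
    rcases hb' with rfl | rfl
    · exact qX_not_mem_qA ha
    · exact qV_not_mem_qA ha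
  · rw [nbhd_qV] at hb'
    rcases hb' with rfl
    exact qW_not_mem_qA ha

lemma deg_eq_of_ne (a : ↥(qA α)) (hay : a.val ≠ qT y) :
    (((GQ Gt y N).induce (qA α)).neighborSet a).ncard
      = ((GQ Gt y N).neighborSet a.val).ncard := by
  rw [induce_nbhd_ncard, Set.inter_eq_left.mpr (nbhd_subset_qA Gt y N a.val a.2 hay)]

lemma adj_qTy_qX : (GQ Gt y N).Adj (qT y) qX :=
  (gq_adj Gt y N _ _).mpr (Or.inr (Or.inl (Or.inl ⟨rfl, rfl⟩)))

lemma adj_qX_qW : (GQ Gt y N).Adj qX qW :=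
  (gq_adj Gt y N _ _).mpr (Or.inr (Or.inr (Or.inl (Or.inl ⟨rfl, rfl⟩))))

lemma adj_qW_qV : (GQ Gt y N).Adj qW qV :=
  (gq_adj Gt y N _ _).mpr (Or.inr (Or.inr (Or.inr (Or.inl (Or.inl ⟨rfl, rfl⟩)))))

lemma deg_qTy [Finite α] :
    ((GQ Gt y N).neighborSet (qT y)).ncard
      = (((GQ Gt y N).induce (qA α)).neighborSet ⟨qT y, qT_mem_qA y⟩).ncard + 1 := by
  have hsplit : (GQ Gt y N).neighborSet (qT y)
      = ((GQ Gt y N).neighborSet (qT y) ∩ qA α) ∪ {qX} := by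
    ext b
    constructor
    · intro hb
      by_cases hbA : b ∈ qA α
      · exact Or.inl ⟨hb, hbA⟩
      · simp only [qA, Set.mem_setOf_eq, not_not, Set.mem_insert_iff,
          Set.mem_singleton_iff] at hbA
        rcases hbA with rfl | rfl | rfl
        · exact Or.inr rfl
        · exfalso
          have hadj : (GQ Gt y N).Adj (qT y) qW := hb
          have hb' : qT y ∈ (GQ Gt y N).neighborSet qW := hadj.symm
          rw [nbhd_qW] at hb'
          rcases hb' with h | h <;> exact absurd h (by simp [qT, qX, qV])
        · exfalso
          have hadj : (GQ Gt y N).Adj (qT y) qV := hb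
          have hb' : qT y ∈ (GQ Gt y N).neighborSet qV := hadj.symm
          rw [nbhd_qV] at hb'
          exact absurd hb' (by simp [qT, qW])
    · rintro (⟨hb, -⟩ | rfl)
      · exact hb
      · exact adj_qTy_qX Gt y N
  rw [induce_nbhd_ncard]
  conv_lhs => rw [hsplit]
  rw [Set.ncard_union_eq (by simp [Set.disjoint_singleton_right])
    (Set.toFinite _) (Set.toFinite _), Set.ncard_singleton]


lemma qT_injective : Function.Injective (qT : α → (α ⊕ Fin 3) ⊕ Unit) := by
  intro a b h
  simpa [qT] using h

lemma deg_qX_val : ((GQ Gt y N).neighborSet qX).ncard = 2 := by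
  rw [nbhd_qX, Set.ncard_pair (by simp [qT, qW])]

lemma deg_qW_val : ((GQ Gt y N).neighborSet qW).ncard = 2 := by
  rw [nbhd_qW, Set.ncard_pair (by simp [qX, qV])]

lemma deg_qV_val : ((GQ Gt y N).neighborSet qV).ncard = 1 := by
  rw [nbhd_qV, Set.ncard_singleton]

lemma degp_qTy [Finite α] (h2 : 2 ≤ (Gt.neighborSet y).ncard) :
    2 ≤ (((GQ Gt y N).induce (qA α)).neighborSet ⟨qT y, qT_mem_qA y⟩).ncard := by
  rw [induce_nbhd_ncard]
  have hsub : qT '' (Gt.neighborSet y) ⊆ (GQ Gt y N).neighborSet (qT y) ∩ qA α := by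
    rintro - ⟨p, hp, rfl⟩
    exact ⟨(gq_adj Gt y N _ _).mpr (Or.inl ⟨y, p, hp, rfl, rfl⟩), by simp⟩
  calc (2:ℕ) ≤ (Gt.neighborSet y).ncard := h2
    _ = (qT '' Gt.neighborSet y).ncard := (Set.ncard_image_of_injective _ qT_injective).symm
    _ ≤ _ := Set.ncard_le_ncard hsub (Set.toFinite _)

lemma edge_count [Finite α] :
    (GQ Gt y N).edgeSet.ncard = ((GQ Gt y N).induce (qA α)).edgeSet.ncard + 3 := by
  classical
  set G := GQ Gt y N with hGdef
  set E' := Sym2.map (Subtype.val : ↥(qA α) → (α ⊕ Fin 3) ⊕ Unit) '' ((G.induce (qA α)).edgeSet)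
    with hE'
  have hmemA : ∀ e ∈ E', ∀ z ∈ e, z ∈ qA α := by
    rintro e ⟨e', he', rfl⟩ z hz
    rw [Sym2.mem_map] at hz
    obtain ⟨c, -, rfl⟩ := hz
    exact c.2
  have hin : ∀ a b, a ∈ qA α → b ∈ qA α → G.Adj a b → s(a, b) ∈ E' := by
    intro a b ha hb hab
    exact ⟨s(⟨a, ha⟩, ⟨b, hb⟩), (mem_edgeSet _).mpr (comap_adj.mpr hab), by rw [Sym2.map_pair_eq]⟩
  have hdecomp : G.edgeSet = E' ∪ {s(qT y, qX), s(qX, qW), s(qW, qV)} := by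
    ext e
    refine Sym2.ind (fun a b => ?_) e
    simp only [mem_edgeSet, Set.mem_union, Set.mem_insert_iff, Set.mem_singleton_iff]
    constructor
    · intro hab
      rcases (gq_adj Gt y N a b).mp hab with ⟨p, q, hpq, rfl, rfl⟩ | (⟨rfl,rfl⟩|⟨rfl,rfl⟩) |
        (⟨rfl,rfl⟩|⟨rfl,rfl⟩) | (⟨rfl,rfl⟩|⟨rfl,rfl⟩) | ⟨n, hn, (⟨rfl,rfl⟩|⟨rfl,rfl⟩)⟩
      · exact Or.inl (hin _ _ (by simp) (by simp) hab)
      · exact Or.inr (Or.inl rfl)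
      · exact Or.inr (Or.inl Sym2.eq_swap)
      · exact Or.inr (Or.inr (Or.inl rfl))
      · exact Or.inr (Or.inr (Or.inl Sym2.eq_swap))
      · exact Or.inr (Or.inr (Or.inr rfl))
      · exact Or.inr (Or.inr (Or.inr Sym2.eq_swap))
      · exact Or.inl (hin _ _ (by simp) (by simp) hab)
      · exact Or.inl (hin _ _ (by simp) (by simp) hab)
    · rintro (he | he | he | he)
      case _ =>
        obtain ⟨e', he', heq⟩ := he
        revert heq
        refine Sym2.ind (fun c d hcd => ?_) e' he'
        intro heq
        rw [Sym2.map_pair_eq] at heq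
        have hadj : G.Adj c.val d.val := comap_adj.mp ((mem_edgeSet _).mp hcd)
        rw [Sym2.eq_iff] at heq
        rcases heq with ⟨rfl, rfl⟩ | ⟨rfl, rfl⟩
        · exact hadj
        · exact hadj.symm
      all_goals
        rw [Sym2.eq_iff] at he
        rcases he with ⟨rfl, rfl⟩ | ⟨rfl, rfl⟩
      · exact adj_qTy_qX Gt y N
      · exact (adj_qTy_qX Gt y N).symm
      · exact adj_qX_qW Gt y N
      · exact (adj_qX_qW Gt y N).symm
      · exact adj_qW_qV Gt y N
      · exact (adj_qW_qV Gt y N).symm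
  have hdisj : Disjoint E' {s(qT y, qX), s(qX, qW), s(qW, qV)} := by
    rw [Set.disjoint_left]
    intro e heE' heT
    rcases heT with rfl | rfl | rfl
    · exact qX_not_mem_qA (hmemA _ heE' qX (by rw [Sym2.mem_iff]; right; rfl))
    · exact qX_not_mem_qA (hmemA _ heE' qX (by rw [Sym2.mem_iff]; left; rfl))
    · exact qW_not_mem_qA (hmemA _ heE' qW (by rw [Sym2.mem_iff]; left; rfl))
  have hcard3 : ({s(qT y, qX), s(qX, qW), s(qW, qV)} :
      Set (Sym2 ((α ⊕ Fin 3) ⊕ Unit))).ncard = 3 := by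
    rw [Set.ncard_insert_of_notMem (by simp [Sym2.eq_iff, qT, qX, qW, qV]),
      Set.ncard_insert_of_notMem (by simp [Sym2.eq_iff, qX, qW, qV]), Set.ncard_singleton]
  rw [hdecomp, Set.ncard_union_eq hdisj (Set.toFinite _) (Set.toFinite _), hcard3,
    Set.ncard_image_of_injective _ (Sym2.map.injective Subtype.val_injective)]

end QT2


/-- Let `G ∈ QT₂`, i.e. `G` is obtained from a tree `T' = o2Ext T y ∈ Γ₂`
(where `T ∈ Γ`, `y` has status `B`, and `x, w, v` are the vertices added in the last
step) and a new vertex `h` by adding `t ≥ 2` edges between `h` and `V(T') \ {x, w, v}`.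
If `G' = G[V(G) \ {x, w, v}]` satisfies `γₜ(G') ≤ a(G') + 1`, then
`γₜ(G) ≤ a(G) + 1`. -/
theorem stmt_2 (T : LGraph) (y : T.V)
    (hT : InGamma T) (hy : T.sta y = Status.B)
    (N : Finset T.V) (htN : 2 ≤ N.card)
    (G : SimpleGraph ((T.V ⊕ Fin 3) ⊕ Unit))
    (hG : G = attachVertex (o2Ext T y).G (Sum.inl '' (N : Set T.V)))
    (h' :
      totalDominationNumber (G.induce
        {u | u ∉ ({Sum.inl (Sum.inr 0), Sum.inl (Sum.inr 1),
          Sum.inl (Sum.inr 2)} : Set ((T.V ⊕ Fin 3) ⊕ Unit))}) ≤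
      annihilationNumber (G.induce
        {u | u ∉ ({Sum.inl (Sum.inr 0), Sum.inl (Sum.inr 1),
          Sum.inl (Sum.inr 2)} : Set ((T.V ⊕ Fin 3) ⊕ Unit))}) + 1) :
    totalDominationNumber G ≤ annihilationNumber G + 1 := by
  classical
  haveI : Finite T.V := inGamma_finite hT
  have hGQ : G = GQ T.G y N := hG
  subst hGQ
  set Gq : SimpleGraph ((T.V ⊕ Fin 3) ⊕ Unit) := GQ T.G y N with hGq
  set G' : SimpleGraph ↥(qA T.V) := Gq.induce (qA T.V) with hG'
  have h'' : totalDominationNumber G' ≤ annihilationNumber G' + 1 := h'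
  haveI : Fintype ((T.V ⊕ Fin 3) ⊕ Unit) := Fintype.ofFinite _
  haveI : Fintype ↥(qA T.V) := Fintype.ofFinite _
  -- G' has a total dominating set
  have hNne : ∃ n, n ∈ N := Finset.card_pos.mp (by omega) |>.imp (fun _ h => h)
  have hneD : {k | ∃ D : Finset ↥(qA T.V), (∀ v, ∃ u ∈ D, G'.Adj v u) ∧ D.card = k}.Nonempty := by
    refine ⟨Finset.univ.card, Finset.univ, fun v => ?_, rfl⟩
    obtain ⟨a, ha⟩ := v
    rcases a with (p | i) | u
    · obtain ⟨q, hq⟩ := inGamma_no_isolated hT p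
      exact ⟨⟨qT q, qT_mem_qA q⟩, Finset.mem_univ _,
        comap_adj.mpr ((gq_adj T.G y N _ _).mpr (Or.inl ⟨p, q, hq, rfl, rfl⟩))⟩
    · exfalso
      fin_cases i
      · exact qX_not_mem_qA ha
      · exact qW_not_mem_qA ha
      · exact qV_not_mem_qA ha
    · obtain ⟨n, hn⟩ := hNne
      exact ⟨⟨qT n, qT_mem_qA n⟩, Finset.mem_univ _,
        comap_adj.mpr ((gq_adj T.G y N _ _).mpr
          (Or.inr (Or.inr (Or.inr (Or.inr ⟨n, hn, Or.inr ⟨rfl, rfl⟩⟩)))))⟩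
  obtain ⟨D', hD'dom, hD'card⟩ := Nat.sInf_mem hneD
  have hD'card' : D'.card = totalDominationNumber G' := hD'card
  -- annihilation set of G'
  have hbdd' : BddAbove {k | ∃ S : Finset ↥(qA T.V), S.card = k ∧
      ∑ v ∈ S, (G'.neighborSet v).ncard ≤ G'.edgeSet.ncard} := by
    refine ⟨Fintype.card ↥(qA T.V), ?_⟩
    rintro k ⟨S, rfl, -⟩
    exact Finset.card_le_univ S
  have hne' : {k | ∃ S : Finset ↥(qA T.V), S.card = k ∧
      ∑ v ∈ S, (G'.neighborSet v).ncard ≤ G'.edgeSet.ncard}.Nonempty :=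
    ⟨0, ∅, rfl, by simp⟩
  obtain ⟨S', hS'card, hS'sum⟩ := Nat.sSup_mem hne' hbdd'
  have hS'card' : S'.card = annihilationNumber G' := hS'card
  have hbddG : BddAbove {k | ∃ S : Finset ((T.V ⊕ Fin 3) ⊕ Unit), S.card = k ∧
      ∑ v ∈ S, (Gq.neighborSet v).ncard ≤ Gq.edgeSet.ncard} := by
    refine ⟨Fintype.card ((T.V ⊕ Fin 3) ⊕ Unit), ?_⟩
    rintro k ⟨S, rfl, -⟩
    exact Finset.card_le_univ S
  -- Step C : total domination of Gq
  have hγ : totalDominationNumber Gq ≤ totalDominationNumber G' + 2 := by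
    set D : Finset ((T.V ⊕ Fin 3) ⊕ Unit) := D'.image Subtype.val ∪ {qW, qV} with hD
    have hdom : ∀ a, ∃ u ∈ D, Gq.Adj a u := by
      intro a
      by_cases ha : a ∈ qA T.V
      · obtain ⟨u, hu, hadj⟩ := hD'dom ⟨a, ha⟩
        refine ⟨u.val, ?_, comap_adj.mp hadj⟩
        exact Finset.mem_union_left _ (Finset.mem_image.mpr ⟨u, hu, rfl⟩)
      · rw [qA, Set.mem_setOf_eq, not_not, Set.mem_insert_iff, Set.mem_insert_iff,
          Set.mem_singleton_iff] at ha
        rcases ha with rfl | rfl | rfl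
        · exact ⟨qW, Finset.mem_union_right _ (by simp), adj_qX_qW T.G y N⟩
        · exact ⟨qV, Finset.mem_union_right _ (by simp), adj_qW_qV T.G y N⟩
        · exact ⟨qW, Finset.mem_union_right _ (by simp), (adj_qW_qV T.G y N).symm⟩
    have hcard : D.card ≤ D'.card + 2 := by
      calc D.card ≤ (D'.image Subtype.val).card + ({qW, qV} : Finset _).card :=
            Finset.card_union_le _ _
        _ ≤ D'.card + 2 := by
            have h1 := Finset.card_image_le (s := D') (f := Subtype.val)
            have h2 : ({qW, qV} : Finset ((T.V ⊕ Fin 3) ⊕ Unit)).card ≤ 2 :=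
              Finset.card_insert_le _ _ |>.trans (by simp)
            omega
    calc totalDominationNumber Gq ≤ D.card := Nat.sInf_le ⟨D, hdom, rfl⟩
      _ ≤ D'.card + 2 := hcard
      _ = totalDominationNumber G' + 2 := by rw [hD'card']
  -- Step D : annihilation of Gq
  have hα : annihilationNumber G' + 2 ≤ annihilationNumber Gq := by
    set Y' : ↥(qA T.V) := ⟨qT y, qT_mem_qA y⟩ with hY'
    have hdegY : 2 ≤ (G'.neighborSet Y').ncard :=
      degp_qTy T.G y N (inGamma_B_deg hT y hy)
    by_cases hY : Y' ∈ S'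
    · -- replace y by x, add w, v
      set S : Finset ((T.V ⊕ Fin 3) ⊕ Unit) :=
        (S'.erase Y').image Subtype.val ∪ {qX, qW, qV} with hS
      have hdisj : Disjoint ((S'.erase Y').image Subtype.val)
          ({qX, qW, qV} : Finset ((T.V ⊕ Fin 3) ⊕ Unit)) := by
        rw [Finset.disjoint_right]
        intro a haT haI
        obtain ⟨u, -, rfl⟩ := Finset.mem_image.mp haI
        have h2 := u.2
        simp only [Finset.mem_insert, Finset.mem_singleton] at haT
        rcases haT with h | h | h
        · exact qX_not_mem_qA (h ▸ h2)
        · exact qW_not_mem_qA (h ▸ h2)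
        · exact qV_not_mem_qA (h ▸ h2)
      have hcard : S.card = S'.card + 2 := by
        rw [hS, Finset.card_union_of_disjoint hdisj,
          Finset.card_image_of_injective _ Subtype.val_injective,
          Finset.card_erase_of_mem hY]
        have hpos : 1 ≤ S'.card := Finset.card_pos.mpr ⟨Y', hY⟩
        have h3 : ({qX, qW, qV} : Finset ((T.V ⊕ Fin 3) ⊕ Unit)).card = 3 := by
          rw [Finset.card_insert_of_notMem (by simp [qX, qW, qV]),
            Finset.card_insert_of_notMem (by simp [qW, qV]), Finset.card_singleton]
        omega
      have hsum : ∑ v ∈ S, (Gq.neighborSet v).ncard ≤ Gq.edgeSet.ncard := by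
        rw [hS, Finset.sum_union hdisj,
          Finset.sum_image (fun a _ b _ h => Subtype.val_injective h)]
        have hsum3 : ∑ v ∈ ({qX, qW, qV} : Finset ((T.V ⊕ Fin 3) ⊕ Unit)),
            (Gq.neighborSet v).ncard = 5 := by
          rw [Finset.sum_insert (by simp [qX, qW, qV]),
            Finset.sum_insert (by simp [qW, qV]), Finset.sum_singleton,
            deg_qX_val, deg_qW_val, deg_qV_val]
          rfl
        have hre : ∑ u ∈ S'.erase Y', (Gq.neighborSet u.val).ncard
            = ∑ u ∈ S'.erase Y', (G'.neighborSet u).ncard := by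
          refine Finset.sum_congr rfl (fun u hu => ?_)
          have huy : u.val ≠ qT y := by
            intro h
            exact (Finset.ne_of_mem_erase hu) (Subtype.ext h)
          exact (deg_eq_of_ne T.G y N u huy).symm
        have hkey : (∑ u ∈ S'.erase Y', (G'.neighborSet u).ncard) + (G'.neighborSet Y').ncard
            = ∑ u ∈ S', (G'.neighborSet u).ncard := Finset.sum_erase_add S' _ hY
        have hm := edge_count T.G y N
        rw [← hGq, ← hG'] at hm
        rw [hsum3, hre]
        omega
      exact le_csSup hbddG ⟨S, by omega, hsum⟩
    · -- add w, v
      set S : Finset ((T.V ⊕ Fin 3) ⊕ Unit) := S'.image Subtype.val ∪ {qW, qV} with hS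
      have hdisj : Disjoint (S'.image Subtype.val)
          ({qW, qV} : Finset ((T.V ⊕ Fin 3) ⊕ Unit)) := by
        rw [Finset.disjoint_right]
        intro a haT haI
        obtain ⟨u, -, rfl⟩ := Finset.mem_image.mp haI
        have h2 := u.2
        simp only [Finset.mem_insert, Finset.mem_singleton] at haT
        rcases haT with h | h
        · exact qW_not_mem_qA (h ▸ h2)
        · exact qV_not_mem_qA (h ▸ h2)
      have hcard : S.card = S'.card + 2 := by
        rw [hS, Finset.card_union_of_disjoint hdisj,
          Finset.card_image_of_injective _ Subtype.val_injective]
        have h2 : ({qW, qV} : Finset ((T.V ⊕ Fin 3) ⊕ Unit)).card = 2 := by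
          rw [Finset.card_insert_of_notMem (by simp [qW, qV]), Finset.card_singleton]
        omega
      have hsum : ∑ v ∈ S, (Gq.neighborSet v).ncard ≤ Gq.edgeSet.ncard := by
        rw [hS, Finset.sum_union hdisj,
          Finset.sum_image (fun a _ b _ h => Subtype.val_injective h)]
        have hsum2 : ∑ v ∈ ({qW, qV} : Finset ((T.V ⊕ Fin 3) ⊕ Unit)),
            (Gq.neighborSet v).ncard = 3 := by
          rw [Finset.sum_insert (by simp [qW, qV]), Finset.sum_singleton,
            deg_qW_val, deg_qV_val]
        have hre : ∑ u ∈ S', (Gq.neighborSet u.val).ncard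
            = ∑ u ∈ S', (G'.neighborSet u).ncard := by
          refine Finset.sum_congr rfl (fun u hu => ?_)
          have huy : u.val ≠ qT y := by
            intro h
            have hu' : u = Y' := Subtype.ext h
            exact hY (hu' ▸ hu)
          exact (deg_eq_of_ne T.G y N u huy).symm
        have hm := edge_count T.G y N
        rw [← hGq, ← hG'] at hm
        rw [hsum2, hre]
        omega
      exact le_csSup hbddG ⟨S, by omega, hsum⟩
  omega
end

section
/- If G ∈ QT_4, then γ_t(G) ≤ a(G) + 1. -/
open SimpleGraph

section Helpers

variable {V W : Type}

lemma edgeSet_map' (f : V ↪ W) (G : SimpleGraph V) :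
    (G.map f).edgeSet = Sym2.map f '' G.edgeSet := by
  ext e
  induction e using Sym2.ind with
  | _ a b =>
    simp only [mem_edgeSet, SimpleGraph.map_adj, Set.mem_image]
    constructor
    · rintro ⟨u, v, h, rfl, rfl⟩
      exact ⟨s(u, v), h, rfl⟩
    · rintro ⟨e', he', hmap⟩
      induction e' using Sym2.ind with
      | _ u v =>
        rw [Sym2.map_pair_eq, Sym2.eq_iff] at hmap
        rcases hmap with ⟨rfl, rfl⟩ | ⟨rfl, rfl⟩
        · exact ⟨u, v, he', rfl, rfl⟩
        · exact ⟨v, u, he'.symm, rfl, rfl⟩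

lemma nbr_inl (G : SimpleGraph V) (E : Set (Sym2 (V ⊕ W))) (a : V)
    (hE : ∀ e ∈ E, (Sum.inl a : V ⊕ W) ∉ e) :
    ((G.map Function.Embedding.inl ⊔ SimpleGraph.fromEdgeSet E).neighborSet (Sum.inl a))
      = Sum.inl '' G.neighborSet a := by
  ext b
  simp only [mem_neighborSet, sup_adj, SimpleGraph.map_adj, fromEdgeSet_adj,
    Function.Embedding.inl_apply, Set.mem_image]
  constructor
  · rintro (⟨u, v, h, hu, hv⟩ | ⟨he, _⟩)
    · exact ⟨v, by cases hu; exact h, hv⟩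
    · exact absurd (Sym2.mem_mk_left _ _) (hE _ he)
  · rintro ⟨v, h, rfl⟩
    exact Or.inl ⟨a, v, h, rfl, rfl⟩

lemma deg_inl (G : SimpleGraph V) (E : Set (Sym2 (V ⊕ W))) (a : V)
    (hE : ∀ e ∈ E, (Sum.inl a : V ⊕ W) ∉ e) :
    ((G.map Function.Embedding.inl ⊔ SimpleGraph.fromEdgeSet E).neighborSet
      (Sum.inl a)).ncard = (G.neighborSet a).ncard := by
  rw [nbr_inl G E a hE, Set.ncard_image_of_injective _ Sum.inl_injective]

lemma nbr_inl_sub (G : SimpleGraph V) (E : Set (Sym2 (V ⊕ W))) (a : V) :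
    ((G.map Function.Embedding.inl ⊔ SimpleGraph.fromEdgeSet E).neighborSet (Sum.inl a))
      ⊆ Sum.inl '' G.neighborSet a ∪ {b | s(Sum.inl a, b) ∈ E} := by
  intro b hb
  simp only [mem_neighborSet, sup_adj, SimpleGraph.map_adj, fromEdgeSet_adj,
    Function.Embedding.inl_apply] at hb
  rcases hb with ⟨u, v, h, hu, hv⟩ | ⟨he, _⟩
  · exact Or.inl ⟨v, by cases hu; exact h, hv⟩
  · exact Or.inr he

lemma nbr_inr_sub (G : SimpleGraph V) (E : Set (Sym2 (V ⊕ W))) (a : W) :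
    ((G.map Function.Embedding.inl ⊔ SimpleGraph.fromEdgeSet E).neighborSet (Sum.inr a))
      ⊆ {b | s(Sum.inr a, b) ∈ E} := by
  intro b hb
  simp only [mem_neighborSet, sup_adj, SimpleGraph.map_adj, fromEdgeSet_adj,
    Function.Embedding.inl_apply] at hb
  rcases hb with ⟨u, v, h, hu, hv⟩ | ⟨he, _⟩
  · exact absurd hu (by simp)
  · exact he

lemma edge_union (G : SimpleGraph V) (E : Set (Sym2 (V ⊕ W)))
    (hE : ∀ e ∈ E, ¬ e.IsDiag) :
    (G.map Function.Embedding.inl ⊔ SimpleGraph.fromEdgeSet E).edgeSet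
      = Sym2.map Sum.inl '' G.edgeSet ∪ E := by
  rw [edgeSet_sup, edgeSet_map', edgeSet_fromEdgeSet]
  have : E \ {e | e.IsDiag} = E := by
    ext e; simp only [Set.mem_diff, Set.mem_setOf_eq, and_iff_left_iff_imp]
    exact fun he => hE e he
  rw [show (Sym2.diagSet : Set (Sym2 (V ⊕ W))) = {e | e.IsDiag} from rfl, this]; rfl

lemma edge_count_s4 (G : SimpleGraph V) (E : Set (Sym2 (V ⊕ W)))
    (hE : ∀ e ∈ E, ¬ e.IsDiag)
    (hE2 : ∀ e ∈ E, ∃ w : W, Sum.inr w ∈ e)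
    (hfin : G.edgeSet.Finite) (hfinE : E.Finite) :
    (G.map Function.Embedding.inl ⊔ SimpleGraph.fromEdgeSet E).edgeSet.ncard
      = G.edgeSet.ncard + E.ncard := by
  have hdisj : Disjoint (Sym2.map (Sum.inl : V → V ⊕ W) '' G.edgeSet) E := by
    rw [Set.disjoint_left]
    rintro e ⟨e', _, rfl⟩ heE
    obtain ⟨w, hw⟩ := hE2 _ heE
    rw [Sym2.mem_map] at hw
    obtain ⟨x, _, hx⟩ := hw
    exact Sum.inl_ne_inr hx
  rw [edge_union G E hE, Set.ncard_union_eq hdisj (hfin.image _) hfinE,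
    Set.ncard_image_of_injective _ (Sym2.map.injective Sum.inl_injective)]

end Helpers
/-- The inductive invariant carried along the construction of `Γ`. -/
def GInv (T : LGraph) : Prop :=
  Finite T.V ∧ ∃ D S : Finset T.V,
    (∀ v : T.V, ∃ u ∈ D, T.G.Adj v u) ∧
    (∀ v ∈ S, T.sta v ≠ Status.B) ∧
    D.card ≤ S.card + 1 ∧
    ∑ v ∈ S, (T.G.neighborSet v).ncard ≤ T.G.edgeSet.ncard

lemma inv_iso {L₁ L₂ : LGraph} (h : LIso L₁ L₂) (hI : GInv L₁) : GInv L₂ := by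
  obtain ⟨e, hsta⟩ := h
  obtain ⟨hfin, D, S, hD, hS, hcard, hsum⟩ := hI
  refine ⟨Finite.of_equiv _ e.toEquiv, D.map e.toEquiv.toEmbedding,
    S.map e.toEquiv.toEmbedding, ?_, ?_, ?_, ?_⟩
  · intro v
    obtain ⟨u, hu, hadj⟩ := hD (e.symm v)
    refine ⟨e u, Finset.mem_map_of_mem _ hu, ?_⟩
    have := e.map_adj_iff.mpr hadj
    simpa using this
  · intro v hv
    rw [Finset.mem_map] at hv
    obtain ⟨a, ha, rfl⟩ := hv
    intro hc
    exact hS a ha ((hsta a).symm.trans hc)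
  · simpa using hcard
  · rw [Finset.sum_map]
    have hdeg : ∀ a : L₁.V, (L₂.G.neighborSet (e a)).ncard = (L₁.G.neighborSet a).ncard := by
      intro a
      rw [← Nat.card_coe_set_eq, ← Nat.card_coe_set_eq]
      exact Nat.card_congr (e.mapNeighborSet a).symm
    have hedge : L₂.G.edgeSet.ncard = L₁.G.edgeSet.ncard := by
      rw [← Nat.card_coe_set_eq, ← Nat.card_coe_set_eq]
      exact Nat.card_congr e.mapEdgeSet.symm
    rw [hedge]
    calc ∑ a ∈ S, (L₂.G.neighborSet (e.toEquiv.toEmbedding a)).ncard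
        = ∑ a ∈ S, (L₁.G.neighborSet a).ncard := Finset.sum_congr rfl fun a _ => hdeg a
      _ ≤ _ := hsum

def B6 : SimpleGraph (Fin 6) := SimpleGraph.fromRel (fun i j => (i : ℕ) + 1 = (j : ℕ))

def sta6 : Fin 6 → Status := ![Status.C, Status.A, Status.B, Status.B, Status.A, Status.C]

lemma inv_base : GInv baseT0 := by
  show Finite (Fin 6) ∧ ∃ D S : Finset (Fin 6),
    (∀ v : Fin 6, ∃ u ∈ D, B6.Adj v u) ∧
    (∀ v ∈ S, sta6 v ≠ Status.B) ∧
    D.card ≤ S.card + 1 ∧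
    ∑ v ∈ S, (B6.neighborSet v).ncard ≤ B6.edgeSet.ncard
  refine ⟨by infer_instance, ({1, 2, 3, 4} : Finset (Fin 6)),
    ({0, 5, 1} : Finset (Fin 6)), ?_, ?_, ?_, ?_⟩
  · simp only [B6, fromRel_adj]
    decide
  · intro v hv
    fin_cases hv <;> (intro h; simp only [sta6] at h) <;> exact Status.noConfusion h
  · decide
  · have h0 : (B6.neighborSet 0).ncard = 1 := by
      have : B6.neighborSet 0 = {1} := by
        ext b
        simp only [mem_neighborSet, B6, fromRel_adj, Set.mem_singleton_iff]
        revert b; decide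
      rw [this]; exact Set.ncard_singleton _
    have h5 : (B6.neighborSet 5).ncard = 1 := by
      have : B6.neighborSet 5 = {4} := by
        ext b
        simp only [mem_neighborSet, B6, fromRel_adj, Set.mem_singleton_iff]
        revert b; decide
      rw [this]; exact Set.ncard_singleton _
    have h1 : (B6.neighborSet 1).ncard = 2 := by
      have : B6.neighborSet 1 = {0, 2} := by
        ext b
        simp only [mem_neighborSet, B6, fromRel_adj, Set.mem_insert_iff,
          Set.mem_singleton_iff]
        revert b; decide
      rw [this]; exact Set.ncard_pair (by decide)
    have hm : B6.edgeSet.ncard = 5 := by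
      have he : B6.edgeSet
          = ↑({s(0,1), s(1,2), s(2,3), s(3,4), s((4:Fin 6),(5:Fin 6))} :
              Finset (Sym2 (Fin 6))) := by
        ext e
        induction e using Sym2.ind with
        | _ a b =>
          simp only [mem_edgeSet, B6, fromRel_adj, Finset.coe_insert, Set.mem_insert_iff,
            Finset.coe_singleton, Set.mem_singleton_iff]
          revert a b; decide
      rw [he, Set.ncard_coe_finset]
      decide
    rw [hm]
    rw [Finset.sum_insert (by decide), Finset.sum_insert (by decide), Finset.sum_singleton]
    rw [h0, h5, h1]
    omega

lemma inv_o2 (L : LGraph) (y : L.V) (hy : L.sta y = Status.B) (hI : GInv L) :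
    GInv (o2Ext L y) := by
  obtain ⟨hfin, D, S, hD, hS, hcard, hsum⟩ := hI
  haveI := hfin
  letI : DecidableEq L.V := Classical.decEq _
  set E : Set (Sym2 (L.V ⊕ Fin 3)) :=
    {s(Sum.inl y, Sum.inr 0), s(Sum.inr 0, Sum.inr 1), s(Sum.inr 1, Sum.inr 2)} with hE
  have hG : (o2Ext L y).G = L.G.map Function.Embedding.inl ⊔ SimpleGraph.fromEdgeSet E := rfl
  have hmemE : ∀ e, e ∈ E ↔ e = s(Sum.inl y, Sum.inr 0) ∨ e = s(Sum.inr 0, Sum.inr 1) ∨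
      e = s(Sum.inr 1, Sum.inr 2) := by
    intro e
    rw [hE]
    simp only [Set.mem_insert_iff, Set.mem_singleton_iff]
  have hnd : ∀ e ∈ E, ¬ e.IsDiag := by
    intro e he
    rcases (hmemE e).mp he with rfl | rfl | rfl <;> simp
  have hinr : ∀ e ∈ E, ∃ w : Fin 3, Sum.inr w ∈ e := by
    intro e he
    rcases (hmemE e).mp he with rfl | rfl | rfl
    · exact ⟨0, Sym2.mem_mk_right _ _⟩
    · exact ⟨0, Sym2.mem_mk_left _ _⟩
    · exact ⟨1, Sym2.mem_mk_left _ _⟩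
  have hEcard : E.ncard = 3 := by
    rw [hE, Set.ncard_insert_of_notMem (by simp [Sym2.eq_iff]) (Set.toFinite _),
        Set.ncard_insert_of_notMem (by simp [Sym2.eq_iff]) (Set.toFinite _),
        Set.ncard_singleton]
  have hm : (o2Ext L y).G.edgeSet.ncard = L.G.edgeSet.ncard + 3 := by
    have h := edge_count_s4 L.G E hnd hinr (Set.toFinite _) (Set.toFinite _)
    rw [hEcard] at h
    rw [hG]
    exact h
  -- degree of old vertices other than y is unchanged
  have hdeg_old : ∀ a : L.V, a ≠ y →
      ((o2Ext L y).G.neighborSet (Sum.inl a)).ncard = (L.G.neighborSet a).ncard := by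
    intro a ha
    rw [hG]
    refine deg_inl L.G E a ?_
    intro e he hmem
    rcases (hmemE e).mp he with rfl | rfl | rfl <;>
      simp only [Sym2.mem_iff] at hmem <;>
      rcases hmem with h | h <;> simp_all
  -- degree bounds for the new vertices
  have hdeg1 : ((o2Ext L y).G.neighborSet (Sum.inr 1)).ncard ≤ 2 := by
    have hsub : (o2Ext L y).G.neighborSet (Sum.inr 1)
        ⊆ ({Sum.inr 0, Sum.inr 2} : Set (L.V ⊕ Fin 3)) := by
      rw [hG]
      refine (nbr_inr_sub L.G E 1).trans ?_
      intro b hb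
      rw [Set.mem_setOf_eq, hmemE] at hb
      rcases hb with h | h | h <;> rw [Sym2.eq_iff] at h <;>
        rcases h with ⟨h1, h2⟩ | ⟨h1, h2⟩ <;> simp_all
    calc ((o2Ext L y).G.neighborSet (Sum.inr 1)).ncard
        ≤ ({Sum.inr 0, Sum.inr 2} : Set (L.V ⊕ Fin 3)).ncard :=
          Set.ncard_le_ncard hsub (Set.toFinite (α := L.V ⊕ Fin 3) _)
      _ ≤ 2 := (Set.ncard_insert_le _ _).trans (by simp)
  have hdeg2 : ((o2Ext L y).G.neighborSet (Sum.inr 2)).ncard ≤ 1 := by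
    have hsub : (o2Ext L y).G.neighborSet (Sum.inr 2) ⊆ ({Sum.inr 1} : Set (L.V ⊕ Fin 3)) := by
      rw [hG]
      refine (nbr_inr_sub L.G E 2).trans ?_
      intro b hb
      rw [Set.mem_setOf_eq, hmemE] at hb
      rcases hb with h | h | h <;> rw [Sym2.eq_iff] at h <;>
        rcases h with ⟨h1, h2⟩ | ⟨h1, h2⟩ <;> simp_all
    calc ((o2Ext L y).G.neighborSet (Sum.inr 2)).ncard
        ≤ ({Sum.inr 1} : Set (L.V ⊕ Fin 3)).ncard := Set.ncard_le_ncard hsub (Set.toFinite (α := L.V ⊕ Fin 3) _)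
      _ = 1 := Set.ncard_singleton _
  -- assemble
  show Finite (L.V ⊕ Fin 3) ∧ ∃ D' S' : Finset (L.V ⊕ Fin 3),
    (∀ v : L.V ⊕ Fin 3, ∃ u ∈ D', (o2Ext L y).G.Adj v u) ∧
    (∀ v ∈ S', (o2Ext L y).sta v ≠ Status.B) ∧
    D'.card ≤ S'.card + 1 ∧
    ∑ v ∈ S', ((o2Ext L y).G.neighborSet v).ncard ≤ (o2Ext L y).G.edgeSet.ncard
  set D' : Finset (L.V ⊕ Fin 3) := D.map Function.Embedding.inl ∪ {Sum.inr 0, Sum.inr 1}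
    with hD'
  set S' : Finset (L.V ⊕ Fin 3) := S.map Function.Embedding.inl ∪ {Sum.inr 1, Sum.inr 2}
    with hS'
  refine ⟨by exact inferInstanceAs (Finite (L.V ⊕ Fin 3)), D', S', ?_, ?_, ?_, ?_⟩
  · rintro (a | i)
    · obtain ⟨u, hu, hadj⟩ := hD a
      refine ⟨Sum.inl u, Finset.mem_union_left _ (Finset.mem_map_of_mem _ hu), ?_⟩
      rw [hG]
      simp only [sup_adj, SimpleGraph.map_adj, Function.Embedding.inl_apply]
      exact Or.inl ⟨a, u, hadj, rfl, rfl⟩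
    · fin_cases i
      · refine ⟨Sum.inr 1, Finset.mem_union_right _
            (Finset.mem_insert_of_mem (Finset.mem_singleton_self _)), ?_⟩
        rw [hG]
        simp only [sup_adj, fromEdgeSet_adj]
        exact Or.inr ⟨(hmemE _).mpr (Or.inr (Or.inl rfl)),
          fun h => absurd (Sum.inr.inj h) (by decide)⟩
      · refine ⟨Sum.inr 0, Finset.mem_union_right _ (Finset.mem_insert_self _ _), ?_⟩
        rw [hG]
        simp only [sup_adj, fromEdgeSet_adj]
        refine Or.inr ⟨?_, fun h => absurd (Sum.inr.inj h) (by decide)⟩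
        rw [Sym2.eq_swap]
        exact (hmemE _).mpr (Or.inr (Or.inl rfl))
      · refine ⟨Sum.inr 1, Finset.mem_union_right _
            (Finset.mem_insert_of_mem (Finset.mem_singleton_self _)), ?_⟩
        rw [hG]
        simp only [sup_adj, fromEdgeSet_adj]
        refine Or.inr ⟨?_, fun h => absurd (Sum.inr.inj h) (by decide)⟩
        rw [Sym2.eq_swap]
        exact (hmemE _).mpr (Or.inr (Or.inr rfl))
  · intro v hv
    rcases Finset.mem_union.mp hv with h | h
    · obtain ⟨a, ha, rfl⟩ := Finset.mem_map.mp h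
      exact hS a ha
    · rcases Finset.mem_insert.mp h with rfl | h
      · exact fun hc => Status.noConfusion hc
      · rw [Finset.mem_singleton.mp h]
        exact fun hc => Status.noConfusion hc
  · have hd : D'.card ≤ D.card + 2 := by
      rw [hD']
      refine (Finset.card_union_le _ _).trans ?_
      have h2 : ({Sum.inr 0, Sum.inr 1} : Finset (L.V ⊕ Fin 3)).card ≤ 2 :=
        Finset.card_insert_le _ _ |>.trans (by simp)
      rw [Finset.card_map]
      omega
    have hs : S'.card = S.card + 2 := by
      rw [hS', Finset.card_union_of_disjoint (by simp [Finset.disjoint_left]),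
        Finset.card_map, Finset.card_insert_of_notMem (by simp), Finset.card_singleton]
    omega
  · have hdisj : Disjoint (S.map (Function.Embedding.inl : L.V ↪ L.V ⊕ Fin 3))
        ({Sum.inr 1, Sum.inr 2} : Finset (L.V ⊕ Fin 3)) := by
      simp [Finset.disjoint_left]
    rw [hS', Finset.sum_union hdisj, Finset.sum_map,
      Finset.sum_insert (by simp), Finset.sum_singleton, hm]
    have h1 : ∑ a ∈ S, ((o2Ext L y).G.neighborSet
          (Function.Embedding.inl a)).ncard
        = ∑ a ∈ S, (L.G.neighborSet a).ncard := by
      refine Finset.sum_congr rfl fun a ha => ?_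
      exact hdeg_old a fun hay => hS a ha (hay ▸ hy)
    rw [h1]
    omega

lemma inv_o1 (L : LGraph) (y : L.V) (hI : GInv L) : GInv (o1Ext L y) := by
  obtain ⟨hfin, D, S, hD, hS, hcard, hsum⟩ := hI
  haveI := hfin
  letI : DecidableEq L.V := Classical.decEq _
  set E : Set (Sym2 (L.V ⊕ Fin 4)) :=
    {s(Sum.inl y, Sum.inr 0), s(Sum.inr 0, Sum.inr 1),
     s(Sum.inr 1, Sum.inr 2), s(Sum.inr 2, Sum.inr 3)} with hE
  have hG : (o1Ext L y).G = L.G.map Function.Embedding.inl ⊔ SimpleGraph.fromEdgeSet E := rfl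
  have hmemE : ∀ e, e ∈ E ↔ e = s(Sum.inl y, Sum.inr 0) ∨ e = s(Sum.inr 0, Sum.inr 1) ∨
      e = s(Sum.inr 1, Sum.inr 2) ∨ e = s(Sum.inr 2, Sum.inr 3) := by
    intro e
    rw [hE]
    simp only [Set.mem_insert_iff, Set.mem_singleton_iff]
  have hnd : ∀ e ∈ E, ¬ e.IsDiag := by
    intro e he
    rcases (hmemE e).mp he with rfl | rfl | rfl | rfl <;> simp
  have hinr : ∀ e ∈ E, ∃ w : Fin 4, Sum.inr w ∈ e := by
    intro e he
    rcases (hmemE e).mp he with rfl | rfl | rfl | rfl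
    · exact ⟨0, Sym2.mem_mk_right _ _⟩
    · exact ⟨0, Sym2.mem_mk_left _ _⟩
    · exact ⟨1, Sym2.mem_mk_left _ _⟩
    · exact ⟨2, Sym2.mem_mk_left _ _⟩
  have hEcard : E.ncard = 4 := by
    rw [hE, Set.ncard_insert_of_notMem (by simp [Sym2.eq_iff]) (Set.toFinite _),
        Set.ncard_insert_of_notMem (by simp [Sym2.eq_iff]) (Set.toFinite _),
        Set.ncard_insert_of_notMem (by simp [Sym2.eq_iff]) (Set.toFinite _),
        Set.ncard_singleton]
  have hm : (o1Ext L y).G.edgeSet.ncard = L.G.edgeSet.ncard + 4 := by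
    have h := edge_count_s4 L.G E hnd hinr (Set.toFinite _) (Set.toFinite _)
    rw [hEcard] at h
    rw [hG]
    exact h
  have hdeg_old : ∀ a : L.V, a ≠ y →
      ((o1Ext L y).G.neighborSet (Sum.inl a)).ncard = (L.G.neighborSet a).ncard := by
    intro a ha
    rw [hG]
    refine deg_inl L.G E a ?_
    intro e he hmem
    rcases (hmemE e).mp he with rfl | rfl | rfl | rfl <;>
      simp only [Sym2.mem_iff] at hmem <;>
      rcases hmem with h | h <;> simp_all
  have hdeg_y : ((o1Ext L y).G.neighborSet (Sum.inl y)).ncard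
      ≤ (L.G.neighborSet y).ncard + 1 := by
    have hsub : (o1Ext L y).G.neighborSet (Sum.inl y)
        ⊆ (Sum.inl '' L.G.neighborSet y ∪ {Sum.inr 0} : Set (L.V ⊕ Fin 4)) := by
      rw [hG]
      refine (nbr_inl_sub L.G E y).trans ?_
      refine Set.union_subset_union_right _ ?_
      intro b hb
      rw [Set.mem_setOf_eq, hmemE] at hb
      rcases hb with h | h | h | h <;> rw [Sym2.eq_iff] at h <;>
        rcases h with ⟨h1, h2⟩ | ⟨h1, h2⟩ <;>
        first
          | exact h2
          | exact Or.inl h2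
          | exact Or.inr h2
          | exact absurd h1 (by simp)
    calc ((o1Ext L y).G.neighborSet (Sum.inl y)).ncard
        ≤ (Sum.inl '' L.G.neighborSet y ∪ {Sum.inr 0} : Set (L.V ⊕ Fin 4)).ncard :=
          Set.ncard_le_ncard hsub (Set.toFinite (α := L.V ⊕ Fin 4) _)
      _ ≤ (Sum.inl '' L.G.neighborSet y).ncard + ({Sum.inr 0} : Set (L.V ⊕ Fin 4)).ncard :=
          Set.ncard_union_le _ _
      _ = (L.G.neighborSet y).ncard + 1 := by
          rw [Set.ncard_image_of_injective _ Sum.inl_injective, Set.ncard_singleton]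
  have hdeg2 : ((o1Ext L y).G.neighborSet (Sum.inr 2)).ncard ≤ 2 := by
    have hsub : (o1Ext L y).G.neighborSet (Sum.inr 2)
        ⊆ ({Sum.inr 1, Sum.inr 3} : Set (L.V ⊕ Fin 4)) := by
      rw [hG]
      refine (nbr_inr_sub L.G E 2).trans ?_
      intro b hb
      rw [Set.mem_setOf_eq, hmemE] at hb
      rcases hb with h | h | h | h <;> rw [Sym2.eq_iff] at h <;>
        rcases h with ⟨h1, h2⟩ | ⟨h1, h2⟩ <;>
        first
          | exact h2
          | exact Or.inl h2
          | exact Or.inr h2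
          | exact absurd h1 (by simp)
    calc ((o1Ext L y).G.neighborSet (Sum.inr 2)).ncard
        ≤ ({Sum.inr 1, Sum.inr 3} : Set (L.V ⊕ Fin 4)).ncard :=
          Set.ncard_le_ncard hsub (Set.toFinite (α := L.V ⊕ Fin 4) _)
      _ ≤ 2 := (Set.ncard_insert_le _ _).trans (by simp)
  have hdeg3 : ((o1Ext L y).G.neighborSet (Sum.inr 3)).ncard ≤ 1 := by
    have hsub : (o1Ext L y).G.neighborSet (Sum.inr 3) ⊆ ({Sum.inr 2} : Set (L.V ⊕ Fin 4)) := by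
      rw [hG]
      refine (nbr_inr_sub L.G E 3).trans ?_
      intro b hb
      rw [Set.mem_setOf_eq, hmemE] at hb
      rcases hb with h | h | h | h <;> rw [Sym2.eq_iff] at h <;>
        rcases h with ⟨h1, h2⟩ | ⟨h1, h2⟩ <;>
        first
          | exact h2
          | exact Or.inl h2
          | exact Or.inr h2
          | exact absurd h1 (by simp)
    calc ((o1Ext L y).G.neighborSet (Sum.inr 3)).ncard
        ≤ ({Sum.inr 2} : Set (L.V ⊕ Fin 4)).ncard := Set.ncard_le_ncard hsub (Set.toFinite (α := L.V ⊕ Fin 4) _)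
      _ = 1 := Set.ncard_singleton _
  show Finite (L.V ⊕ Fin 4) ∧ ∃ D' S' : Finset (L.V ⊕ Fin 4),
    (∀ v : L.V ⊕ Fin 4, ∃ u ∈ D', (o1Ext L y).G.Adj v u) ∧
    (∀ v ∈ S', (o1Ext L y).sta v ≠ Status.B) ∧
    D'.card ≤ S'.card + 1 ∧
    ∑ v ∈ S', ((o1Ext L y).G.neighborSet v).ncard ≤ (o1Ext L y).G.edgeSet.ncard
  set D' : Finset (L.V ⊕ Fin 4) := D.map Function.Embedding.inl ∪ {Sum.inr 1, Sum.inr 2}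
    with hD'
  set S' : Finset (L.V ⊕ Fin 4) := S.map Function.Embedding.inl ∪ {Sum.inr 2, Sum.inr 3}
    with hS'
  refine ⟨by exact inferInstanceAs (Finite (L.V ⊕ Fin 4)), D', S', ?_, ?_, ?_, ?_⟩
  · rintro (a | i)
    · obtain ⟨u, hu, hadj⟩ := hD a
      refine ⟨Sum.inl u, Finset.mem_union_left _ (Finset.mem_map_of_mem _ hu), ?_⟩
      rw [hG]
      simp only [sup_adj, SimpleGraph.map_adj, Function.Embedding.inl_apply]
      exact Or.inl ⟨a, u, hadj, rfl, rfl⟩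
    · fin_cases i
      · refine ⟨Sum.inr 1, Finset.mem_union_right _ (Finset.mem_insert_self _ _), ?_⟩
        rw [hG]
        simp only [sup_adj, fromEdgeSet_adj]
        exact Or.inr ⟨(hmemE _).mpr (Or.inr (Or.inl rfl)),
          fun h => absurd (Sum.inr.inj h) (by decide)⟩
      · refine ⟨Sum.inr 2, Finset.mem_union_right _
            (Finset.mem_insert_of_mem (Finset.mem_singleton_self _)), ?_⟩
        rw [hG]
        simp only [sup_adj, fromEdgeSet_adj]
        exact Or.inr ⟨(hmemE _).mpr (Or.inr (Or.inr (Or.inl rfl))),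
          fun h => absurd (Sum.inr.inj h) (by decide)⟩
      · refine ⟨Sum.inr 1, Finset.mem_union_right _ (Finset.mem_insert_self _ _), ?_⟩
        rw [hG]
        simp only [sup_adj, fromEdgeSet_adj]
        refine Or.inr ⟨?_, fun h => absurd (Sum.inr.inj h) (by decide)⟩
        rw [Sym2.eq_swap]
        exact (hmemE _).mpr (Or.inr (Or.inr (Or.inl rfl)))
      · refine ⟨Sum.inr 2, Finset.mem_union_right _
            (Finset.mem_insert_of_mem (Finset.mem_singleton_self _)), ?_⟩
        rw [hG]
        simp only [sup_adj, fromEdgeSet_adj]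
        refine Or.inr ⟨?_, fun h => absurd (Sum.inr.inj h) (by decide)⟩
        rw [Sym2.eq_swap]
        exact (hmemE _).mpr (Or.inr (Or.inr (Or.inr rfl)))
  · intro v hv
    rcases Finset.mem_union.mp hv with h | h
    · obtain ⟨a, ha, rfl⟩ := Finset.mem_map.mp h
      exact hS a ha
    · rcases Finset.mem_insert.mp h with rfl | h
      · exact fun hc => Status.noConfusion hc
      · rw [Finset.mem_singleton.mp h]
        exact fun hc => Status.noConfusion hc
  · have hd : D'.card ≤ D.card + 2 := by
      rw [hD']
      refine (Finset.card_union_le _ _).trans ?_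
      have h2 : ({Sum.inr 1, Sum.inr 2} : Finset (L.V ⊕ Fin 4)).card ≤ 2 :=
        Finset.card_insert_le _ _ |>.trans (by simp)
      rw [Finset.card_map]
      omega
    have hs : S'.card = S.card + 2 := by
      rw [hS', Finset.card_union_of_disjoint (by simp [Finset.disjoint_left]),
        Finset.card_map, Finset.card_insert_of_notMem (by simp), Finset.card_singleton]
    omega
  · have hdisj : Disjoint (S.map (Function.Embedding.inl : L.V ↪ L.V ⊕ Fin 4))
        ({Sum.inr 2, Sum.inr 3} : Finset (L.V ⊕ Fin 4)) := by
      simp [Finset.disjoint_left]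
    rw [hS', Finset.sum_union hdisj, Finset.sum_map,
      Finset.sum_insert (by simp), Finset.sum_singleton, hm]
    have h1 : ∑ a ∈ S, ((o1Ext L y).G.neighborSet (Function.Embedding.inl a)).ncard
        ≤ (∑ a ∈ S, (L.G.neighborSet a).ncard) + 1 := by
      by_cases hyS : y ∈ S
      · rw [← Finset.add_sum_erase _ _ hyS, ← Finset.add_sum_erase _
          (fun a => (L.G.neighborSet a).ncard) hyS]
        have h2 : ∑ a ∈ S.erase y, ((o1Ext L y).G.neighborSet
            (Function.Embedding.inl a)).ncard
            = ∑ a ∈ S.erase y, (L.G.neighborSet a).ncard := by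
          refine Finset.sum_congr rfl fun a ha => ?_
          exact hdeg_old a (Finset.mem_erase.mp ha).1
        rw [h2]
        have := hdeg_y
        simp only [Function.Embedding.inl_apply]
        omega
      · have h2 : ∑ a ∈ S, ((o1Ext L y).G.neighborSet
            (Function.Embedding.inl a)).ncard
            = ∑ a ∈ S, (L.G.neighborSet a).ncard := by
          refine Finset.sum_congr rfl fun a ha => ?_
          exact hdeg_old a (fun h => hyS (h ▸ ha))
        omega
    omega

lemma inv_gamma (T : LGraph) (hT : InGamma T) : GInv T := by
  induction hT with
  | base L h => exact inv_iso h inv_base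
  | op1 L y hL hsta hleaf L' h ih => exact inv_iso h (inv_o1 L y ih)
  | op2 L y hL hsta L' h ih => exact inv_iso h (inv_o2 L y hsta ih)

/-- If `G ∈ QT₄`, i.e. `G` is obtained from a tree `T' = o2Ext T y ∈ Γ₂`
(where `T ∈ Γ`, `y` has status `B`, and `x, w, v` are the vertices added in the last
step) and a new vertex `h` by adding `t ≥ 2` edges between `h` and `{x, w, v}`, then
`γₜ(G) ≤ a(G) + 1`. -/
theorem stmt_4 (T : LGraph) (y : T.V)
    (hT : InGamma T) (hy : T.sta y = Status.B)
    (N : Finset (Fin 3)) (htN : 2 ≤ N.card)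
    (G : SimpleGraph ((T.V ⊕ Fin 3) ⊕ Unit))
    (hG : G = attachVertex (o2Ext T y).G (Sum.inr '' (N : Set (Fin 3)))) :
    totalDominationNumber G ≤ annihilationNumber G + 1 := by
  obtain ⟨hfin, D, S, hD, hS, hcard, hsum⟩ := inv_gamma T hT
  haveI := hfin
  letI : DecidableEq T.V := Classical.decEq _
  subst hG
  set T' : SimpleGraph (T.V ⊕ Fin 3) := (o2Ext T y).G with hT'def
  -- facts about T' (the o₂ extension)
  set E : Set (Sym2 (T.V ⊕ Fin 3)) :=
    {s(Sum.inl y, Sum.inr 0), s(Sum.inr 0, Sum.inr 1), s(Sum.inr 1, Sum.inr 2)} with hE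
  have hT'eq : T' = T.G.map Function.Embedding.inl ⊔ SimpleGraph.fromEdgeSet E := rfl
  have hmemE : ∀ e, e ∈ E ↔ e = s(Sum.inl y, Sum.inr 0) ∨ e = s(Sum.inr 0, Sum.inr 1) ∨
      e = s(Sum.inr 1, Sum.inr 2) := by
    intro e
    rw [hE]
    simp only [Set.mem_insert_iff, Set.mem_singleton_iff]
  have hnd : ∀ e ∈ E, ¬ e.IsDiag := by
    intro e he
    rcases (hmemE e).mp he with rfl | rfl | rfl <;> simp
  have hinr : ∀ e ∈ E, ∃ w : Fin 3, Sum.inr w ∈ e := by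
    intro e he
    rcases (hmemE e).mp he with rfl | rfl | rfl
    · exact ⟨0, Sym2.mem_mk_right _ _⟩
    · exact ⟨0, Sym2.mem_mk_left _ _⟩
    · exact ⟨1, Sym2.mem_mk_left _ _⟩
  have hEcard : E.ncard = 3 := by
    rw [hE, Set.ncard_insert_of_notMem (by simp [Sym2.eq_iff]) (Set.toFinite _),
        Set.ncard_insert_of_notMem (by simp [Sym2.eq_iff]) (Set.toFinite _),
        Set.ncard_singleton]
  have hm1 : T'.edgeSet.ncard = T.G.edgeSet.ncard + 3 := by
    have h := edge_count_s4 T.G E hnd hinr (Set.toFinite _) (Set.toFinite _)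
    rw [hEcard] at h
    rw [hT'eq]
    exact h
  have hdeg_old : ∀ a : T.V, a ≠ y →
      (T'.neighborSet (Sum.inl a)).ncard = (T.G.neighborSet a).ncard := by
    intro a ha
    rw [hT'eq]
    refine deg_inl T.G E a ?_
    intro e he hmem
    rcases (hmemE e).mp he with rfl | rfl | rfl <;>
      simp only [Sym2.mem_iff] at hmem <;>
      rcases hmem with h | h <;> simp_all
  have hnbr_old : ∀ a : T.V, a ≠ y →
      T'.neighborSet (Sum.inl a) = Sum.inl '' T.G.neighborSet a := by
    intro a ha
    rw [hT'eq]
    refine nbr_inl T.G E a ?_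
    intro e he hmem
    rcases (hmemE e).mp he with rfl | rfl | rfl <;>
      simp only [Sym2.mem_iff] at hmem <;>
      rcases hmem with h | h <;> simp_all
  have hnbr2 : T'.neighborSet (Sum.inr 2) ⊆ {Sum.inr 1} := by
    rw [hT'eq]
    refine (nbr_inr_sub T.G E 2).trans ?_
    intro b hb
    rw [Set.mem_setOf_eq, hmemE] at hb
    rcases hb with h | h | h <;> rw [Sym2.eq_iff] at h <;>
      rcases h with ⟨h1, h2⟩ | ⟨h1, h2⟩ <;> simp_all
  have hadjT : ∀ a u : T.V, T.G.Adj a u → T'.Adj (Sum.inl a) (Sum.inl u) := by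
    intro a u hadj
    rw [hT'eq]
    simp only [sup_adj, SimpleGraph.map_adj, Function.Embedding.inl_apply]
    exact Or.inl ⟨a, u, hadj, rfl, rfl⟩
  have hadj01 : T'.Adj (Sum.inr 0) (Sum.inr 1) := by
    rw [hT'eq]
    simp only [sup_adj, fromEdgeSet_adj]
    exact Or.inr ⟨(hmemE _).mpr (Or.inr (Or.inl rfl)),
      fun h => absurd (Sum.inr.inj h) (by decide)⟩
  have hadj10 : T'.Adj (Sum.inr 1) (Sum.inr 0) := hadj01.symm
  have hadj21 : T'.Adj (Sum.inr 2) (Sum.inr 1) := by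
    rw [hT'eq]
    simp only [sup_adj, fromEdgeSet_adj]
    refine Or.inr ⟨?_, fun h => absurd (Sum.inr.inj h) (by decide)⟩
    rw [Sym2.eq_swap]
    exact (hmemE _).mpr (Or.inr (Or.inr rfl))
  -- the quasi-tree G
  set E2 : Set (Sym2 ((T.V ⊕ Fin 3) ⊕ Unit)) :=
    {e | ∃ u ∈ Sum.inr '' (N : Set (Fin 3)), e = s(Sum.inl u, Sum.inr ())} with hE2
  have hGdef : attachVertex T' (Sum.inr '' (N : Set (Fin 3)))
      = T'.map Function.Embedding.inl ⊔ SimpleGraph.fromEdgeSet E2 := rfl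
  have hmemE2 : ∀ e, e ∈ E2 ↔ ∃ i ∈ N, e = s(Sum.inl (Sum.inr i), Sum.inr ()) := by
    intro e
    rw [hE2]
    constructor
    · rintro ⟨u, ⟨i, hi, rfl⟩, rfl⟩
      exact ⟨i, hi, rfl⟩
    · rintro ⟨i, hi, rfl⟩
      exact ⟨Sum.inr i, ⟨i, hi, rfl⟩, rfl⟩
  have hnd2 : ∀ e ∈ E2, ¬ e.IsDiag := by
    intro e he
    obtain ⟨i, _, rfl⟩ := (hmemE2 e).mp he
    simp
  have hinr2 : ∀ e ∈ E2, ∃ w : Unit, Sum.inr w ∈ e := by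
    intro e he
    obtain ⟨i, _, rfl⟩ := (hmemE2 e).mp he
    exact ⟨(), Sym2.mem_mk_right _ _⟩
  have hE2card : E2.ncard = N.card := by
    have himg : E2 = (fun i : Fin 3 => s(Sum.inl (Sum.inr i), Sum.inr ())) '' (N : Set (Fin 3)) := by
      ext e
      rw [hmemE2]
      constructor
      · rintro ⟨i, hi, rfl⟩; exact ⟨i, hi, rfl⟩
      · rintro ⟨i, hi, rfl⟩; exact ⟨i, hi, rfl⟩
    rw [himg, Set.ncard_image_of_injective _ ?_, Set.ncard_coe_finset]
    intro i j hij
    rw [Sym2.eq_iff] at hij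
    rcases hij with ⟨h1, _⟩ | ⟨h1, _⟩
    · exact Sum.inr.inj (Sum.inl.inj h1)
    · exact absurd h1 (by simp)
  set GG : SimpleGraph ((T.V ⊕ Fin 3) ⊕ Unit) :=
    attachVertex T' (Sum.inr '' (N : Set (Fin 3))) with hGG
  have hmG : GG.edgeSet.ncard = T.G.edgeSet.ncard + 3 + N.card := by
    have h := edge_count_s4 T' E2 hnd2 hinr2 (Set.toFinite _) (Set.toFinite _)
    rw [hE2card, hm1] at h
    rw [hGdef]
    exact h
  -- degrees in G
  have hdeg_oldG : ∀ a : T.V, a ≠ y →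
      (GG.neighborSet (Sum.inl (Sum.inl a))).ncard = (T.G.neighborSet a).ncard := by
    intro a ha
    rw [hGdef]
    have h1 : ((T'.map Function.Embedding.inl ⊔ SimpleGraph.fromEdgeSet E2).neighborSet
        (Sum.inl (Sum.inl a))).ncard = (T'.neighborSet (Sum.inl a)).ncard := by
      refine deg_inl T' E2 (Sum.inl a) ?_
      intro e he hmem
      obtain ⟨i, _, rfl⟩ := (hmemE2 e).mp he
      simp only [Sym2.mem_iff] at hmem
      rcases hmem with h | h <;> simp_all
    rw [h1, hdeg_old a ha]
  have hdegv : (GG.neighborSet (Sum.inl (Sum.inr 2))).ncard ≤ 2 := by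
    have hsub : GG.neighborSet (Sum.inl (Sum.inr 2))
        ⊆ {Sum.inl (Sum.inr 1), Sum.inr ()} := by
      rw [hGdef]
      refine (nbr_inl_sub T' E2 (Sum.inr 2)).trans ?_
      intro b hb
      rcases hb with ⟨c, hc, rfl⟩ | hb
      · exact Or.inl (congrArg Sum.inl (hnbr2 hc))
      · rw [Set.mem_setOf_eq, hmemE2] at hb
        obtain ⟨i, _, h⟩ := hb
        rw [Sym2.eq_iff] at h
        rcases h with ⟨h1, h2⟩ | ⟨h1, h2⟩
        · exact Or.inr h2
        · exact absurd h1 (by simp)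
    calc (GG.neighborSet (Sum.inl (Sum.inr 2))).ncard
        ≤ ({Sum.inl (Sum.inr 1), Sum.inr ()} : Set ((T.V ⊕ Fin 3) ⊕ Unit)).ncard :=
          Set.ncard_le_ncard hsub (Set.toFinite _)
      _ ≤ 2 := (Set.ncard_insert_le _ _).trans (by simp)
  have hdegh : (GG.neighborSet (Sum.inr ())).ncard ≤ N.card := by
    have hsub : GG.neighborSet (Sum.inr ())
        ⊆ (fun i : Fin 3 => (Sum.inl (Sum.inr i) : (T.V ⊕ Fin 3) ⊕ Unit)) '' (N : Set (Fin 3)) := by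
      rw [hGdef]
      refine (nbr_inr_sub T' E2 ()).trans ?_
      intro b hb
      rw [Set.mem_setOf_eq, hmemE2] at hb
      obtain ⟨i, hi, h⟩ := hb
      rw [Sym2.eq_iff] at h
      rcases h with ⟨h1, h2⟩ | ⟨h1, h2⟩
      · exact absurd h1 (by simp)
      · exact ⟨i, hi, h2.symm⟩
    calc (GG.neighborSet (Sum.inr ())).ncard
        ≤ _ := Set.ncard_le_ncard hsub (Set.toFinite _)
      _ ≤ N.card := by
          rw [Set.ncard_image_of_injective _ (fun i j h => Sum.inr.inj (Sum.inl.inj h)),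
            Set.ncard_coe_finset]
  -- the total dominating set and the annihilation set
  set emb : T.V ↪ (T.V ⊕ Fin 3) ⊕ Unit :=
    (Function.Embedding.inl : T.V ↪ T.V ⊕ Fin 3).trans
      (Function.Embedding.inl : (T.V ⊕ Fin 3) ↪ (T.V ⊕ Fin 3) ⊕ Unit) with hemb
  set DG : Finset ((T.V ⊕ Fin 3) ⊕ Unit) :=
    D.map emb ∪ {Sum.inl (Sum.inr 0), Sum.inl (Sum.inr 1)} with hDG
  set SG : Finset ((T.V ⊕ Fin 3) ⊕ Unit) :=
    S.map emb ∪ {Sum.inl (Sum.inr 2), Sum.inr ()} with hSG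
  have hmapadj : ∀ p q : T.V ⊕ Fin 3, T'.Adj p q → GG.Adj (Sum.inl p) (Sum.inl q) := by
    intro p q h
    rw [hGdef]
    simp only [sup_adj, SimpleGraph.map_adj, Function.Embedding.inl_apply]
    exact Or.inl ⟨p, q, h, rfl, rfl⟩
  have hTD : ∀ v : (T.V ⊕ Fin 3) ⊕ Unit, ∃ u ∈ DG, GG.Adj v u := by
    rintro ((a | i) | u)
    · obtain ⟨u, hu, hadj⟩ := hD a
      exact ⟨emb u, Finset.mem_union_left _ (Finset.mem_map_of_mem _ hu),
        hmapadj _ _ (hadjT a u hadj)⟩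
    · fin_cases i
      · exact ⟨Sum.inl (Sum.inr 1), Finset.mem_union_right _
          (Finset.mem_insert_of_mem (Finset.mem_singleton_self _)),
          hmapadj _ _ hadj01⟩
      · exact ⟨Sum.inl (Sum.inr 0), Finset.mem_union_right _ (Finset.mem_insert_self _ _),
          hmapadj _ _ hadj10⟩
      · exact ⟨Sum.inl (Sum.inr 1), Finset.mem_union_right _
          (Finset.mem_insert_of_mem (Finset.mem_singleton_self _)),
          hmapadj _ _ hadj21⟩
    · -- the added vertex h
      have hex : ∃ i ∈ N, i = 0 ∨ i = 1 := by
        obtain ⟨i, hi, j, hj, hij⟩ := Finset.one_lt_card.mp (by omega : 1 < N.card)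
        have hcases : ∀ i j : Fin 3, i ≠ j →
            (i = 0 ∨ i = 1) ∨ (j = 0 ∨ j = 1) := by decide
        rcases hcases i j hij with h | h
        · exact ⟨i, hi, h⟩
        · exact ⟨j, hj, h⟩
      obtain ⟨i, hiN, hi01⟩ := hex
      have hadjh : GG.Adj (Sum.inr u) (Sum.inl (Sum.inr i)) := by
        rw [hGdef]
        simp only [sup_adj, fromEdgeSet_adj]
        refine Or.inr ⟨?_, fun h => absurd h (by simp)⟩
        rw [Sym2.eq_swap]
        cases u
        exact (hmemE2 _).mpr ⟨i, hiN, rfl⟩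
      refine ⟨Sum.inl (Sum.inr i), ?_, hadjh⟩
      rcases hi01 with rfl | rfl
      · exact Finset.mem_union_right _ (Finset.mem_insert_self _ _)
      · exact Finset.mem_union_right _
          (Finset.mem_insert_of_mem (Finset.mem_singleton_self _))
  -- cardinalities
  have hkD : DG.card ≤ D.card + 2 := by
    rw [hDG]
    refine (Finset.card_union_le _ _).trans ?_
    have h2 : ({Sum.inl (Sum.inr 0), Sum.inl (Sum.inr 1)} :
        Finset ((T.V ⊕ Fin 3) ⊕ Unit)).card ≤ 2 :=
      Finset.card_insert_le _ _ |>.trans (by simp)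
    rw [Finset.card_map]
    omega
  have hdisjS : Disjoint (S.map emb)
      ({Sum.inl (Sum.inr 2), Sum.inr ()} : Finset ((T.V ⊕ Fin 3) ⊕ Unit)) := by
    rw [Finset.disjoint_left]
    rintro a ha hb
    obtain ⟨b, _, rfl⟩ := Finset.mem_map.mp ha
    have hbe : emb b = Sum.inl (Sum.inl b) := rfl
    rw [hbe] at hb
    rcases Finset.mem_insert.mp hb with h | h
    · exact Sum.inl_ne_inr (Sum.inl.inj h)
    · exact Sum.inl_ne_inr (Finset.mem_singleton.mp h)
  have hkS : SG.card = S.card + 2 := by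
    rw [hSG, Finset.card_union_of_disjoint hdisjS,
      Finset.card_map, Finset.card_insert_of_notMem (by simp), Finset.card_singleton]
  -- the degree sum of SG
  have hsumG : ∑ v ∈ SG, (GG.neighborSet v).ncard ≤ GG.edgeSet.ncard := by
    rw [hSG, Finset.sum_union hdisjS, Finset.sum_map,
      Finset.sum_insert (by simp), Finset.sum_singleton, hmG]
    have h1 : ∑ a ∈ S, (GG.neighborSet (emb a)).ncard
        = ∑ a ∈ S, (T.G.neighborSet a).ncard := by
      refine Finset.sum_congr rfl fun a ha => ?_
      exact hdeg_oldG a fun hay => hS a ha (hay ▸ hy)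
    rw [h1]
    omega
  -- conclude
  haveI : Fintype ((T.V ⊕ Fin 3) ⊕ Unit) := Fintype.ofFinite _
  have htd : totalDominationNumber GG ≤ DG.card :=
    Nat.sInf_le ⟨DG, hTD, rfl⟩
  have han : SG.card ≤ annihilationNumber GG := by
    refine le_csSup ⟨Fintype.card ((T.V ⊕ Fin 3) ⊕ Unit), ?_⟩ ⟨SG, rfl, hsumG⟩
    rintro k ⟨S', h1, _⟩
    exact h1 ▸ Finset.card_le_univ S'
  show totalDominationNumber GG ≤ annihilationNumber GG + 1
  omega
end
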